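/- For every positive integer k, the function F(x) = -∑_{i=0}^{k-1} [ (2k-1)!! / ((2k-2i-1)!! (2k-2i)) x^{2k-2i} - (2k-1)!!/(2k-2i) ] satisfies F''(x) - x F'(x) = x^{2k} - (2k-1)!!. -/

import Mathlib

/-- Double factorial: `n!! = n (n-2) (n-4) ⋯`, with `0!! = 1!! = 1`. -/
def dfac : ℕ → ℕ
  | 0 => 1
  | 1 => 1
  | (n + 2) => (n + 2) * dfac n

lemma dfac_pos : ∀ n, 0 < dfac n
  | 0 => by simp [dfac]
  | 1 => by simp [dfac]
  | n + 2 => by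
    simp only [dfac]
    exact Nat.mul_pos (Nat.succ_pos _) (dfac_pos n)

lemma dfac_cast_ne (n : ℕ) : ((dfac n : ℝ)) ≠ 0 := by
  exact_mod_cast (dfac_pos n).ne'

/-- key per-term identity (telescoping form) -/
lemma term_eq (D : ℝ) (x : ℝ) (t : ℕ) (ht : 1 ≤ t) :
    x * (D / ((dfac (2 * t - 1) : ℝ) * ((2 * t : ℕ) : ℝ)) * ((2 * t : ℕ) : ℝ) * x ^ (2 * t - 1))
      - D / ((dfac (2 * t - 1) : ℝ) * ((2 * t : ℕ) : ℝ)) * ((2 * t : ℕ) : ℝ)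
          * ((2 * t - 1 : ℕ) : ℝ) * x ^ (2 * t - 1 - 1)
    = D / (dfac (2 * t - 1) : ℝ) * x ^ (2 * t)
      - D / (dfac (2 * t - 3) : ℝ) * x ^ (2 * t - 2) := by
  have h2t : ((2 * t : ℕ) : ℝ) = 2 * (t : ℝ) := by push_cast; ring
  have hc1 : ((2 * t - 1 : ℕ) : ℝ) = 2 * (t : ℝ) - 1 := by
    rw [Nat.cast_sub (by omega)]; push_cast; ring
  have he : 2 * t - 1 - 1 = 2 * t - 2 := by omega
  have p1 : x ^ (2 * t - 1) = x * x ^ (2 * t - 2) := by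
    rw [← pow_succ']; congr 1; omega
  have p2 : x ^ (2 * t) = x ^ 2 * x ^ (2 * t - 2) := by
    rw [← pow_add]; congr 1; omega
  have htR : (1 : ℝ) ≤ (t : ℝ) := by exact_mod_cast ht
  have h2tne : (2 * (t : ℝ)) ≠ 0 := by nlinarith
  rcases eq_or_lt_of_le ht with h1 | h2
  · -- t = 1
    have ht1 : t = 1 := h1.symm
    subst ht1
    norm_num [dfac]
    ring
  · -- t ≥ 2
    have hsplit : 2 * t - 1 = (2 * t - 3) + 2 := by omega
    have hc3 : ((2 * t - 3 : ℕ) : ℝ) = 2 * (t : ℝ) - 3 := by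
      rw [Nat.cast_sub (by omega)]; push_cast; ring
    have hdf : (dfac (2 * t - 1) : ℝ) = (2 * (t : ℝ) - 1) * (dfac (2 * t - 3) : ℝ) := by
      rw [hsplit, dfac]
      push_cast
      rw [hc3]; ring
    have h2tm1 : (2 * (t : ℝ) - 1) ≠ 0 := by
      have : (2 : ℝ) ≤ (t : ℝ) := by exact_mod_cast h2
      nlinarith
    rw [he, hc1, h2t, p1, p2, hdf]
    have hA := dfac_cast_ne (2 * t - 3)
    field_simp

/-- The explicit polynomial solves the Ornstein-Uhlenbeck Stein equation for
`h(x) = x^(2k)`, whose standard normal expectation is `(2k-1)!!`. -/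
theorem stmt_3 (k : ℕ) (hk : 0 < k) (F : ℝ → ℝ)
    (hF : ∀ x : ℝ, F x =
      -∑ i ∈ Finset.range k,
        ((dfac (2 * k - 1) : ℝ) / ((dfac (2 * k - 2 * i - 1) : ℝ) * (2 * k - 2 * i : ℝ))
            * x ^ (2 * k - 2 * i)
          - (dfac (2 * k - 1) : ℝ) / (2 * k - 2 * i : ℝ))) :
    ∀ x : ℝ,
      deriv (deriv F) x - x * deriv F x = x ^ (2 * k) - (dfac (2 * k - 1) : ℝ) := by
  have hFg : F = fun x : ℝ => -∑ i ∈ Finset.range k,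
      ((dfac (2 * k - 1) : ℝ) / ((dfac (2 * k - 2 * i - 1) : ℝ) * (2 * k - 2 * i : ℝ))
          * x ^ (2 * k - 2 * i)
        - (dfac (2 * k - 1) : ℝ) / (2 * k - 2 * i : ℝ)) := funext hF
  -- first derivative
  have hd1 : deriv F = fun y : ℝ => -∑ i ∈ Finset.range k,
      ((dfac (2 * k - 1) : ℝ) / ((dfac (2 * k - 2 * i - 1) : ℝ) * (2 * k - 2 * i : ℝ))
        * ((2 * k - 2 * i : ℕ) : ℝ) * y ^ (2 * k - 2 * i - 1)) := by
    funext y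
    rw [hFg]
    have h : HasDerivAt (fun x : ℝ => -∑ i ∈ Finset.range k,
        ((dfac (2 * k - 1) : ℝ) / ((dfac (2 * k - 2 * i - 1) : ℝ) * (2 * k - 2 * i : ℝ))
            * x ^ (2 * k - 2 * i)
          - (dfac (2 * k - 1) : ℝ) / (2 * k - 2 * i : ℝ)))
        (-∑ i ∈ Finset.range k,
          ((dfac (2 * k - 1) : ℝ) / ((dfac (2 * k - 2 * i - 1) : ℝ) * (2 * k - 2 * i : ℝ))
            * ((2 * k - 2 * i : ℕ) : ℝ) * y ^ (2 * k - 2 * i - 1))) y := by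
      apply HasDerivAt.neg
      apply HasDerivAt.fun_sum
      intro i hi
      have h := ((hasDerivAt_pow (2 * k - 2 * i) y).const_mul
        ((dfac (2 * k - 1) : ℝ) / ((dfac (2 * k - 2 * i - 1) : ℝ) * (2 * k - 2 * i : ℝ)))).sub_const
        ((dfac (2 * k - 1) : ℝ) / (2 * k - 2 * i : ℝ))
      convert h using 1
      ring
    exact h.deriv
  intro x
  have hd2 : deriv (deriv F) x = -∑ i ∈ Finset.range k,
      ((dfac (2 * k - 1) : ℝ) / ((dfac (2 * k - 2 * i - 1) : ℝ) * (2 * k - 2 * i : ℝ))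
        * ((2 * k - 2 * i : ℕ) : ℝ) * ((2 * k - 2 * i - 1 : ℕ) : ℝ)
        * x ^ (2 * k - 2 * i - 1 - 1)) := by
    rw [hd1]
    have h : HasDerivAt (fun y : ℝ => -∑ i ∈ Finset.range k,
        ((dfac (2 * k - 1) : ℝ) / ((dfac (2 * k - 2 * i - 1) : ℝ) * (2 * k - 2 * i : ℝ))
          * ((2 * k - 2 * i : ℕ) : ℝ) * y ^ (2 * k - 2 * i - 1)))
        (-∑ i ∈ Finset.range k,
          ((dfac (2 * k - 1) : ℝ) / ((dfac (2 * k - 2 * i - 1) : ℝ) * (2 * k - 2 * i : ℝ))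
            * ((2 * k - 2 * i : ℕ) : ℝ) * ((2 * k - 2 * i - 1 : ℕ) : ℝ)
            * x ^ (2 * k - 2 * i - 1 - 1))) x := by
      apply HasDerivAt.neg
      apply HasDerivAt.fun_sum
      intro i hi
      have h := (hasDerivAt_pow (2 * k - 2 * i - 1) x).const_mul
        ((dfac (2 * k - 1) : ℝ) / ((dfac (2 * k - 2 * i - 1) : ℝ) * (2 * k - 2 * i : ℝ))
          * ((2 * k - 2 * i : ℕ) : ℝ))
      exact h.congr_deriv (by ring)
    exact h.deriv
  rw [hd2, hd1]
  -- now pure algebra / telescoping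
  have key : ∀ i ∈ Finset.range k,
      (x * ((dfac (2 * k - 1) : ℝ) / ((dfac (2 * k - 2 * i - 1) : ℝ) * (2 * k - 2 * i : ℝ))
          * ((2 * k - 2 * i : ℕ) : ℝ) * x ^ (2 * k - 2 * i - 1))
        - (dfac (2 * k - 1) : ℝ) / ((dfac (2 * k - 2 * i - 1) : ℝ) * (2 * k - 2 * i : ℝ))
          * ((2 * k - 2 * i : ℕ) : ℝ) * ((2 * k - 2 * i - 1 : ℕ) : ℝ)
          * x ^ (2 * k - 2 * i - 1 - 1))
      = ((dfac (2 * k - 1) : ℝ) / (dfac (2 * k - 2 * i - 1) : ℝ) * x ^ (2 * k - 2 * i)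
        - (dfac (2 * k - 1) : ℝ) / (dfac (2 * k - 2 * (i + 1) - 1) : ℝ)
          * x ^ (2 * k - 2 * (i + 1))) := by
    intro i hi
    have hik : i < k := Finset.mem_range.1 hi
    set t := k - i with hti
    have htk : k = i + t := by omega
    have ht1 : 1 ≤ t := by omega
    have e1 : 2 * k - 2 * i = 2 * t := by omega
    have e2 : 2 * k - 2 * i - 1 = 2 * t - 1 := by omega
    have e3 : 2 * k - 2 * (i + 1) = 2 * t - 2 := by omega
    have e4 : 2 * k - 2 * (i + 1) - 1 = 2 * t - 3 := by omega
    have hreal : (2 * (k : ℝ) - 2 * (i : ℝ)) = ((2 * t : ℕ) : ℝ) := by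
      have : (k : ℝ) = (i : ℝ) + (t : ℝ) := by exact_mod_cast htk
      push_cast
      rw [this]; ring
    rw [e4, e3, e2, e1, hreal]
    exact term_eq _ x t ht1
  rw [show (-∑ i ∈ Finset.range k,
      ((dfac (2 * k - 1) : ℝ) / ((dfac (2 * k - 2 * i - 1) : ℝ) * (2 * k - 2 * i : ℝ))
        * ((2 * k - 2 * i : ℕ) : ℝ) * ((2 * k - 2 * i - 1 : ℕ) : ℝ)
        * x ^ (2 * k - 2 * i - 1 - 1)))
      - x * (-∑ i ∈ Finset.range k,
      ((dfac (2 * k - 1) : ℝ) / ((dfac (2 * k - 2 * i - 1) : ℝ) * (2 * k - 2 * i : ℝ))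
        * ((2 * k - 2 * i : ℕ) : ℝ) * x ^ (2 * k - 2 * i - 1)))
      = ∑ i ∈ Finset.range k,
        (x * ((dfac (2 * k - 1) : ℝ) / ((dfac (2 * k - 2 * i - 1) : ℝ) * (2 * k - 2 * i : ℝ))
            * ((2 * k - 2 * i : ℕ) : ℝ) * x ^ (2 * k - 2 * i - 1))
          - (dfac (2 * k - 1) : ℝ) / ((dfac (2 * k - 2 * i - 1) : ℝ) * (2 * k - 2 * i : ℝ))
            * ((2 * k - 2 * i : ℕ) : ℝ) * ((2 * k - 2 * i - 1 : ℕ) : ℝ)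
            * x ^ (2 * k - 2 * i - 1 - 1)) from by
    rw [Finset.sum_sub_distrib, ← Finset.mul_sum]
    ring]
  rw [Finset.sum_congr rfl key, Finset.sum_range_sub'
    (fun j => (dfac (2 * k - 1) : ℝ) / (dfac (2 * k - 2 * j - 1) : ℝ) * x ^ (2 * k - 2 * j)) k]
  have h0 : (dfac (2 * k - 1) : ℝ) / (dfac (2 * k - 2 * 0 - 1) : ℝ) * x ^ (2 * k - 2 * 0)
      = x ^ (2 * k) := by
    simp [div_self (dfac_cast_ne (2 * k - 1))]
  have hkk : (dfac (2 * k - 1) : ℝ) / (dfac (2 * k - 2 * k - 1) : ℝ) * x ^ (2 * k - 2 * k)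
      = (dfac (2 * k - 1) : ℝ) := by
    have : 2 * k - 2 * k = 0 := by omega
    simp [this, dfac]
  rw [h0, hkk]
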